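/- With P'(t,q) ∈ ℚ[[t,q]] as above and coefficients d_{a,b}, one has d_{a,b} = d_{a+4, b+6} for all a ≥ 45 and all b. -/

import Mathlib

open MvPowerSeries

noncomputable def tVar : MvPowerSeries (Fin 2) ℚ := MvPowerSeries.X 0
noncomputable def qVar : MvPowerSeries (Fin 2) ℚ := MvPowerSeries.X 1

noncomputable def GORNum : MvPowerSeries (Fin 2) ℚ :=
  (1 + qVar ^ 2) * (1 + tVar ^ 2 * qVar ^ 4) * (1 + tVar ^ 3 * qVar ^ 6) *
    (1 + tVar ^ 7 * qVar ^ 10)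

noncomputable def cf (a b : ℕ) (P : MvPowerSeries (Fin 2) ℚ) : ℚ :=
  MvPowerSeries.coeff (Finsupp.single (0 : Fin 2) a + Finsupp.single (1 : Fin 2) b) P

/-- `bd n f` : every coefficient whose exponent of the first variable exceeds `n` vanishes. -/
def bd (n : ℕ) (f : MvPowerSeries (Fin 2) ℚ) : Prop :=
  ∀ ν : Fin 2 →₀ ℕ, n < ν 0 → MvPowerSeries.coeff ν f = 0

lemma bd_mono {m n : ℕ} {f : MvPowerSeries (Fin 2) ℚ} (h : bd m f) (hmn : m ≤ n) : bd n f :=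
  fun ν hν => h ν (lt_of_le_of_lt hmn hν)

lemma bd_one : bd 0 (1 : MvPowerSeries (Fin 2) ℚ) := by
  intro ν hν
  rw [MvPowerSeries.coeff_one, if_neg]
  intro h
  simp [h] at hν

lemma bd_t : bd 1 tVar := by
  intro ν hν
  rw [tVar, MvPowerSeries.coeff_X, if_neg]
  intro h
  simp [h] at hν

lemma bd_q : bd 0 qVar := by
  intro ν hν
  rw [qVar, MvPowerSeries.coeff_X, if_neg]
  intro h
  rw [h] at hν
  rw [Finsupp.single_apply] at hν
  simp at hν

lemma bd_mul {m n : ℕ} {f g : MvPowerSeries (Fin 2) ℚ} (hf : bd m f) (hg : bd n g) :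
    bd (m + n) (f * g) := by
  intro ν hν
  rw [MvPowerSeries.coeff_mul]
  apply Finset.sum_eq_zero
  rintro ⟨x, y⟩ hxy
  rw [Finset.HasAntidiagonal.mem_antidiagonal] at hxy
  have hx : x 0 + y 0 = ν 0 := by rw [← hxy]; simp
  rcases Nat.lt_or_ge m (x 0) with h | h
  · rw [hf x h, zero_mul]
  · rw [hg y (by omega), mul_zero]

lemma bd_pow {m : ℕ} {f : MvPowerSeries (Fin 2) ℚ} (hf : bd m f) (k : ℕ) :
    bd (m * k) (f ^ k) := by
  induction k with
  | zero => simpa using bd_one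
  | succ k ih =>
      rw [pow_succ, Nat.mul_succ]
      exact bd_mul ih hf

lemma bd_add {n : ℕ} {f g : MvPowerSeries (Fin 2) ℚ} (hf : bd n f) (hg : bd n g) :
    bd n (f + g) := by
  intro ν hν
  rw [map_add, hf ν hν, hg ν hν, add_zero]

lemma bd_RHS : bd 48 (GORNum * (∑ i ∈ Finset.range 7, (tVar ^ 6 * qVar ^ 8) ^ i)) := by
  have ht2 : bd 2 (tVar ^ 2) := by simpa using bd_pow bd_t 2
  have ht3 : bd 3 (tVar ^ 3) := by simpa using bd_pow bd_t 3
  have ht6 : bd 6 (tVar ^ 6) := by simpa using bd_pow bd_t 6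
  have ht7 : bd 7 (tVar ^ 7) := by simpa using bd_pow bd_t 7
  have hq : ∀ k : ℕ, bd 0 (qVar ^ k) := fun k => by simpa using bd_pow bd_q k
  have hnum : bd 12 GORNum := by
    rw [GORNum]
    have h1 : bd 0 (1 + qVar ^ 2) := bd_add bd_one (hq 2)
    have h2 : bd 2 (1 + tVar ^ 2 * qVar ^ 4) :=
      bd_add (bd_mono bd_one (by norm_num)) (by simpa using bd_mul ht2 (hq 4))
    have h3 : bd 3 (1 + tVar ^ 3 * qVar ^ 6) :=
      bd_add (bd_mono bd_one (by norm_num)) (by simpa using bd_mul ht3 (hq 6))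
    have h4 : bd 7 (1 + tVar ^ 7 * qVar ^ 10) :=
      bd_add (bd_mono bd_one (by norm_num)) (by simpa using bd_mul ht7 (hq 10))
    have := bd_mul (bd_mul (bd_mul h1 h2) h3) h4
    simpa using this
  have hsum : bd 36 (∑ i ∈ Finset.range 7, (tVar ^ 6 * qVar ^ 8) ^ i) := by
    intro ν hν
    rw [map_sum]
    apply Finset.sum_eq_zero
    intro i hi
    rw [Finset.mem_range] at hi
    have hbase : bd 6 (tVar ^ 6 * qVar ^ 8) := by simpa using bd_mul ht6 (hq 8)
    have : bd (6 * i) ((tVar ^ 6 * qVar ^ 8) ^ i) := bd_pow hbase i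
    exact bd_mono this (by omega) ν hν
  have := bd_mul hnum hsum
  simpa using this

theorem stmt7 (P' : MvPowerSeries (Fin 2) ℚ)
    (hP' : P' * (1 - tVar ^ 4 * qVar ^ 6)
      = GORNum * (∑ i ∈ Finset.range 7, (tVar ^ 6 * qVar ^ 8) ^ i))
    (a b : ℕ) (ha : a ≥ 45) :
    cf a b P' = cf (a + 4) (b + 6) P' := by
  have key : cf (a + 4) (b + 6) (P' * (1 - tVar ^ 4 * qVar ^ 6)) = 0 := by
    rw [hP']
    apply bd_RHS
    simp only [Finsupp.add_apply, Finsupp.single_apply]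
    simp
    omega
  have hmon : tVar ^ 4 * qVar ^ 6 =
      MvPowerSeries.monomial
        (Finsupp.single (0 : Fin 2) 4 + Finsupp.single (1 : Fin 2) 6) 1 := by
    rw [tVar, qVar, MvPowerSeries.X_pow_eq, MvPowerSeries.X_pow_eq,
      MvPowerSeries.monomial_mul_monomial, one_mul]
  have hexp : Finsupp.single (0 : Fin 2) (a + 4) + Finsupp.single (1 : Fin 2) (b + 6)
      = (Finsupp.single (0 : Fin 2) a + Finsupp.single (1 : Fin 2) b)
        + (Finsupp.single (0 : Fin 2) 4 + Finsupp.single (1 : Fin 2) 6) := by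
    rw [Finsupp.single_add, Finsupp.single_add]
    abel
  unfold cf at key ⊢
  rw [mul_sub, mul_one, map_sub, hmon, hexp,
    MvPowerSeries.coeff_add_mul_monomial, mul_one] at key
  rw [hexp]
  linarith
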